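/- arXiv:math/0610597 — 4 statements merged into one kernel-verified Lean document; each statement's English description precedes it below -/
import Mathlib

section
/- For nonnegative even integer s, the Gaussian integral over ℝ^l of e^{-‖z‖²} times the product (b₁ᵀz)(b₂ᵀz)⋯(b_sᵀz) equals π^{l/2}/(2^s (s/2)!) times the sum over all permutations σ of {1,…,s} of the product (b_{σ(1)}ᵀ b_{σ(2)})⋯(b_{σ(s-1)}ᵀ b_{σ(s)}). -/
open MeasureTheory Finset Real

namespace WickAux


def χ (t : Bool) : ℝ := if t then 1 else -1

lemma sum_χ_pow (m : ℕ) : ∑ t : Bool, χ t ^ m = if Even m then 2 else 0 := by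
  rcases Nat.even_or_odd m with h | h
  · simp [χ, h, h.neg_one_pow]
  · simp [χ, Nat.not_even_iff_odd.2 h, h, h.neg_one_pow]

lemma parity_sum {s : ℕ} (f : Fin s → Fin s) :
    ∑ ε : Fin s → Bool, ((∏ i, χ (ε i)) * ∏ j, χ (ε (f j)))
      = if Function.Bijective f then (2:ℝ)^s else 0 := by
  have key : ∀ ε : Fin s → Bool,
      (∏ i, χ (ε i)) * ∏ j, χ (ε (f j))
        = ∏ i, χ (ε i) ^ ((univ.filter fun j => f j = i).card + 1) := by
    intro ε
    have h1 : ∏ j, χ (ε (f j))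
        = ∏ i, χ (ε i) ^ (univ.filter fun j => f j = i).card := by
      rw [← Finset.prod_fiberwise univ f (fun j => χ (ε (f j)))]
      refine Finset.prod_congr rfl fun i _ => ?_
      rw [Finset.prod_congr rfl (fun j hj => by rw [(Finset.mem_filter.1 hj).2] :
        ∀ j ∈ univ.filter fun j => f j = i, χ (ε (f j)) = χ (ε i)), Finset.prod_const]
    rw [h1, ← Finset.prod_mul_distrib]
    exact Finset.prod_congr rfl fun i _ => (pow_succ' _ _).symm
  simp_rw [key]
  rw [← Fintype.piFinset_univ, ← Finset.prod_univ_sum (fun _ : Fin s => (univ : Finset Bool))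
    (fun i t => χ t ^ ((univ.filter fun j => f j = i).card + 1))]
  have h2 : ∀ i : Fin s, (∑ t : Bool, χ t ^ ((univ.filter fun j => f j = i).card + 1))
      = if Odd (univ.filter fun j => f j = i).card then 2 else 0 := by
    intro i
    rw [sum_χ_pow]
    simp [Nat.even_add_one, Nat.not_even_iff_odd]
  simp_rw [h2]
  by_cases hb : Function.Bijective f
  · rw [if_pos hb]
    have hcard : ∀ i : Fin s, (univ.filter fun j => f j = i).card = 1 := by
      intro i
      rw [Finset.card_eq_one]
      exact ⟨(Equiv.ofBijective f hb).symm i, by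
        ext j
        simp only [Finset.mem_filter, Finset.mem_univ, true_and, Finset.mem_singleton]
        constructor
        · intro hj; exact (Equiv.ofBijective f hb).injective (by
            simpa [Equiv.ofBijective_apply_symm_apply] using hj)
        · rintro rfl; exact Equiv.ofBijective_apply_symm_apply f hb i⟩
    simp [hcard]
  · rw [if_neg hb]
    have hns : ¬ Function.Surjective f := fun h => hb (Finite.surjective_iff_bijective.1 h)
    simp only [Function.Surjective, not_forall, not_exists] at hns
    obtain ⟨i, hi⟩ := hns
    refine Finset.prod_eq_zero (Finset.mem_univ i) ?_
    have : (univ.filter fun j => f j = i) = ∅ := by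
      ext j; simpa using hi j
    rw [this]
    simp



lemma sum_bij_perm {s : ℕ} (F : (Fin s → Fin s) → ℝ) :
    ∑ f : Fin s → Fin s, (if Function.Bijective f then F f else 0)
      = ∑ σ : Equiv.Perm (Fin s), F ⇑σ := by
  rw [← Finset.sum_filter]
  refine (Finset.sum_bij (fun (σ : Equiv.Perm (Fin s)) _ => ⇑σ) ?_ ?_ ?_ ?_).symm
  · intro σ _
    exact Finset.mem_filter.2 ⟨Finset.mem_univ _, σ.bijective⟩
  · intro σ _ τ _ h
    exact Equiv.coe_fn_injective h
  · intro f hf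
    have hb : Function.Bijective f := by simpa using (Finset.mem_filter.1 hf).2
    exact ⟨Equiv.ofBijective f hb, Finset.mem_univ _, rfl⟩
  · intro σ _; rfl

lemma perm_sum_prod {s : ℕ} (x : Fin s → ℝ) :
    ∑ σ : Equiv.Perm (Fin s), ∏ j, x (σ j) = (s.factorial : ℝ) * ∏ j, x j := by
  have : ∀ σ : Equiv.Perm (Fin s), ∏ j, x (σ j) = ∏ j, x j :=
    fun σ => Equiv.prod_comp σ x
  rw [Finset.sum_congr rfl (fun σ _ => this σ), Finset.sum_const, Finset.card_univ,
    Fintype.card_perm, Fintype.card_fin, nsmul_eq_mul]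

lemma prod_pair {M : Type*} [CommMonoid M] (h : ℕ) (u : ℕ → M) :
    ∏ j ∈ range (2*h), u j = ∏ k ∈ range h, (u (2*k) * u (2*k+1)) := by
  induction h with
  | zero => simp
  | succ n ih =>
    rw [show 2*(n+1) = (2*n+1)+1 by ring, Finset.prod_range_succ, Finset.prod_range_succ,
      Finset.prod_range_succ, ih, mul_assoc]

lemma prod_fin_pair {h s : ℕ} (hs : 2*h = s) (u : Fin s → ℝ) :
    ∏ j, u j = ∏ k : Fin h, (u ⟨2*k, by omega⟩ * u ⟨2*k+1, by omega⟩) := by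
  subst hs
  have hv : ∀ (j : Fin (2*h)), u j = (fun n : ℕ => if hn : n < 2*h then u ⟨n, hn⟩ else 1) j.val := by
    intro j; simp [j.isLt]
  rw [Finset.prod_congr rfl (fun j _ => hv j),
    Fin.prod_univ_eq_prod_range (fun n : ℕ => if hn : n < 2*h then u ⟨n, hn⟩ else 1) (2*h),
    prod_pair]
  rw [← Fin.prod_univ_eq_prod_range (fun k =>
    (fun n : ℕ => if hn : n < 2*h then u ⟨n, hn⟩ else 1) (2*k) *
    (fun n : ℕ => if hn : n < 2*h then u ⟨n, hn⟩ else 1) (2*k+1)) h]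
  refine Finset.prod_congr rfl fun k _ => ?_
  have h1 : 2*(k:ℕ) < 2*h := by omega
  have h2 : 2*(k:ℕ)+1 < 2*h := by have := k.isLt; omega
  simp [dif_pos h1, dif_pos h2]



lemma gamma_half (m : ℕ) :
    Real.Gamma ((m:ℝ) + 1/2) = Real.sqrt π * (2*m).factorial / (4^m * m.factorial) := by
  induction m with
  | zero =>
    rw [show ((0:ℕ):ℝ) + 1/2 = 1/2 by norm_num, Real.Gamma_one_half_eq]
    simp
  | succ n ih =>
    have h : ((n+1:ℕ):ℝ) + 1/2 = ((n:ℝ) + 1/2) + 1 := by push_cast; ring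
    rw [h, Real.Gamma_add_one (by positivity), ih]
    have e1 : (2*(n+1)).factorial = (2*n+2) * ((2*n+1) * (2*n).factorial) := by
      rw [show 2*(n+1) = (2*n+1)+1 by ring, Nat.factorial_succ, Nat.factorial_succ]
    have hf : ((n+1).factorial : ℝ) = ((n:ℝ)+1) * n.factorial := by
      rw [Nat.factorial_succ]; push_cast; ring
    rw [e1, pow_succ, hf]
    have h1 : (4:ℝ)^n ≠ 0 := by positivity
    have h2 : (n.factorial : ℝ) ≠ 0 := Nat.cast_ne_zero.2 n.factorial_ne_zero
    have h3 : ((n:ℝ)+1) ≠ 0 := by positivity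
    push_cast
    field_simp
    ring

lemma int1d (n : ℕ) : Integrable (fun x : ℝ => Real.exp (-x^2) * x^n) := by
  have h := integrable_rpow_mul_exp_neg_mul_sq (b := 1) one_pos (s := (n:ℝ))
    (lt_of_lt_of_le neg_one_lt_zero (Nat.cast_nonneg n))
  simp only [Real.rpow_natCast, neg_mul, one_mul] at h
  simpa [mul_comm] using h

lemma gauss1d : ∫ x : ℝ, Real.exp (-x^2) = Real.sqrt π := by
  have := integral_gaussian 1
  simpa using this

lemma moment1d (m : ℕ) :
    ∫ x : ℝ, Real.exp (-x^2) * x^(2*m)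
      = Real.sqrt π * (2*m).factorial / (4^m * m.factorial) := by
  have h1 : (∫ x : ℝ, Real.exp (-x^2) * x^(2*m))
      = 2 * ∫ x in Set.Ioi (0:ℝ), Real.exp (-x^2) * x^(2*m) := by
    rw [← integral_comp_abs (f := fun x => Real.exp (-x^2) * x^(2*m))]
    congr 1; funext x
    rw [sq_abs, (Nat.even_mul.2 (Or.inl even_two)).pow_abs]
  have h3 := integral_rpow_mul_exp_neg_rpow (p := 2) (q := ((2*m:ℕ):ℝ)) two_pos
    (lt_of_lt_of_le neg_one_lt_zero (Nat.cast_nonneg _))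
  have h4 : (((2*m:ℕ):ℝ) + 1)/2 = (m:ℝ) + 1/2 := by push_cast; ring
  rw [h4] at h3
  have h5 : (∫ x in Set.Ioi (0:ℝ), Real.exp (-x^2) * x^(2*m))
      = ∫ x in Set.Ioi (0:ℝ), x ^ (((2*m:ℕ)):ℝ) * Real.exp (-x ^ (2:ℝ)) := by
    refine setIntegral_congr_fun measurableSet_Ioi (fun x _ => ?_)
    rw [Real.rpow_natCast, show ((2:ℝ)) = ((2:ℕ):ℝ) by norm_num, Real.rpow_natCast,
      mul_comm]
  rw [h1, h5, h3, ← gamma_half m]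
  ring
lemma gaussE (l : ℕ) (i₀ : Fin l) (m : ℕ) :
    Integrable (fun x : EuclideanSpace ℝ (Fin l) => Real.exp (-‖x‖^2) * (x i₀)^(2*m)) ∧
    ∫ x : EuclideanSpace ℝ (Fin l), Real.exp (-‖x‖^2) * (x i₀)^(2*m)
      = Real.sqrt π ^ l * (2*m).factorial / (4^m * m.factorial) := by
  set e := MeasurableEquiv.toLp 2 (Fin l → ℝ) with he
  have mp : MeasurePreserving e volume volume := (EuclideanSpace.volume_preserving_symm_measurableEquiv_toLp (Fin l)).symm
  set F := fun x : EuclideanSpace ℝ (Fin l) => Real.exp (-‖x‖^2) * (x i₀)^(2*m) with hF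
  set G := fun (i : Fin l) (x : ℝ) => Real.exp (-x^2) * (if i = i₀ then x^(2*m) else 1) with hG
  have happ : ∀ (y : Fin l → ℝ) (i : Fin l), e y i = y i := by
    intro y i
    rw [he]
    simp [MeasurableEquiv.coe_toLp]
  have hnorm : ∀ y : Fin l → ℝ, ‖e y‖^2 = ∑ i, (y i)^2 := by
    intro y
    rw [EuclideanSpace.norm_eq, Real.sq_sqrt (by positivity)]
    exact Finset.sum_congr rfl fun i _ => by rw [happ, Real.norm_eq_abs, sq_abs]
  have key : ∀ y : Fin l → ℝ, F (e y) = ∏ i, G i (y i) := by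
    intro y
    rw [hF]
    simp only [hG]
    rw [Finset.prod_mul_distrib, ← Real.exp_sum, hnorm, happ]
    rw [Finset.prod_ite_eq' univ i₀ (fun j => (y j)^(2*m)), if_pos (Finset.mem_univ i₀),
      Finset.sum_neg_distrib]
  have hGint : ∀ i, Integrable (G i) := by
    intro i
    by_cases hi : i = i₀
    · simpa [hG, hi] using int1d (2*m)
    · have := int1d 0
      simpa [hG, hi] using this
  have hIntPi : Integrable (fun y : Fin l → ℝ => ∏ i, G i (y i)) :=
    Integrable.fintype_prod_dep hGint
  have hIntF : Integrable F := by
    refine (mp.integrable_comp_emb e.measurableEmbedding).1 ?_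
    have : (F ∘ e) = fun y : Fin l → ℝ => ∏ i, G i (y i) := funext key
    rw [this]
    exact hIntPi
  refine ⟨hIntF, ?_⟩
  have hI : ∫ x, F x = ∫ y : Fin l → ℝ, F (e y) := (mp.integral_comp' F).symm
  rw [hI, integral_congr_ae (Filter.Eventually.of_forall key),
    integral_fintype_prod_volume_eq_prod G]
  have hGi : ∀ i, (∫ x : ℝ, G i x)
      = if i = i₀ then (Real.sqrt π * (2*m).factorial / (4^m * m.factorial)) else Real.sqrt π := by
    intro i
    by_cases hi : i = i₀
    · simp [hG, hi, moment1d]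
    · simp [hG, hi, gauss1d]
  rw [Finset.prod_congr rfl (fun i _ => hGi i), ← Finset.mul_prod_erase univ _ (Finset.mem_univ i₀),
    if_pos rfl]
  have herase : ∏ i ∈ univ.erase i₀,
      (if i = i₀ then (Real.sqrt π * (2*m).factorial / (4^m * m.factorial)) else Real.sqrt π)
      = Real.sqrt π ^ (l-1) := by
    rw [Finset.prod_congr rfl (fun i hi => if_neg (Finset.mem_erase.1 hi).1), Finset.prod_const,
      Finset.card_erase_of_mem (Finset.mem_univ i₀), Finset.card_univ, Fintype.card_fin]
  rw [herase]
  have hl : l - 1 + 1 = l := Nat.succ_pred_eq_of_pos i₀.pos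
  rw [show Real.sqrt π * ↑(2*m).factorial / (4^m * ↑m.factorial) * Real.sqrt π ^ (l-1)
      = Real.sqrt π ^ (l-1+1) * ↑(2*m).factorial / (4^m * ↑m.factorial) by ring, hl]

lemma sqrt_pi_pow (l : ℕ) : Real.sqrt π ^ l = π ^ ((l:ℝ)/2) := by
  rw [Real.sqrt_eq_rpow, ← Real.rpow_natCast (π ^ ((1:ℝ)/2)) l, ← Real.rpow_mul pi_nonneg]
  congr 1
  ring

lemma gaussE0 (l : ℕ) :
    Integrable (fun z : EuclideanSpace ℝ (Fin l) => Real.exp (-‖z‖^2)) ∧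
    ∫ z : EuclideanSpace ℝ (Fin l), Real.exp (-‖z‖^2) = π ^ ((l:ℝ)/2) := by
  rcases l with _ | l'
  · have : IsEmpty (Fin 0) := inferInstance
    rw [show ((0:ℕ):ℝ)/2 = 0 by norm_num, Real.rpow_zero]
    have hfun : (fun z : EuclideanSpace ℝ (Fin 0) => Real.exp (-‖z‖^2)) = fun _ => (1:ℝ) :=
      funext fun z => by rw [Subsingleton.elim z 0]; simp
    rw [hfun]
    constructor
    · exact integrable_const _
    · rw [volume_euclideanSpace_eq_dirac]
      simp
  · have h := gaussE (l'+1) ⟨0, Nat.succ_pos l'⟩ 0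
    rw [← sqrt_pi_pow]
    constructor
    · have := h.1
      simpa using this
    · have := h.2
      simpa using this

lemma moment_eq (l s : ℕ) (hs : s % 2 = 0) (w : EuclideanSpace ℝ (Fin l)) :
    Integrable (fun z : EuclideanSpace ℝ (Fin l) =>
      Real.exp (-‖z‖^2) * (inner ℝ w z : ℝ)^s) ∧
    ∫ z : EuclideanSpace ℝ (Fin l), Real.exp (-‖z‖^2) * (inner ℝ w z : ℝ)^s
      = π ^ ((l:ℝ)/2) * s.factorial / (2^s * (s/2).factorial)
        * (inner ℝ w w : ℝ)^(s/2) := by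
  have hsm : s = 2 * (s/2) := by omega
  set m := s/2 with hm
  by_cases hw : w = 0
  · subst hw
    by_cases hs0 : s = 0
    · subst hs0
      simp only [inner_zero_left, pow_zero, mul_one]
      refine ⟨(gaussE0 l).1, ?_⟩
      rw [(gaussE0 l).2]
      norm_num
    · have hm0 : m ≠ 0 := by omega
      simp only [inner_zero_left, zero_pow hs0, mul_zero, zero_pow hm0]
      exact ⟨integrable_zero _ _ _, by simp⟩
  · have hl : 0 < l := by
      by_contra h
      push_neg at h
      interval_cases l
      exact hw (Subsingleton.elim w 0)
    set i₀ : Fin l := ⟨0, hl⟩ with hi₀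
    set u := ‖w‖⁻¹ • w with hu_def
    have hu : ‖u‖ = 1 := norm_smul_inv_norm hw
    have hon : Orthonormal ℝ (Set.restrict {i₀} (fun _ : Fin l => u)) := by
      refine ⟨fun i => hu, ?_⟩
      intro i j hij
      exact absurd (Subtype.ext ((Set.mem_singleton_iff.1 i.2).trans
        (Set.mem_singleton_iff.1 j.2).symm)) hij
    obtain ⟨B, hB⟩ := hon.exists_orthonormalBasis_extension_of_card_eq
      (by simp) 
    have hBi : B i₀ = u := hB i₀ rfl
    have hwB : w = ‖w‖ • B i₀ := by
      rw [hBi, hu_def, smul_smul, mul_inv_cancel₀ (norm_ne_zero_iff.2 hw), one_smul]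
    set T := B.repr.symm with hT
    have hinner : ∀ x : EuclideanSpace ℝ (Fin l), (inner ℝ w (T x) : ℝ) = ‖w‖ * x i₀ := by
      intro x
      have h1 : (inner ℝ w (T x) : ℝ) = (inner ℝ (B.repr w) (B.repr (T x)) : ℝ) :=
        (B.repr.inner_map_map w (T x)).symm
      have hrw : B.repr w = ‖w‖ • EuclideanSpace.single i₀ (1:ℝ) := by
        conv_lhs => rw [hwB]
        rw [_root_.map_smul, OrthonormalBasis.repr_self]
      rw [h1, hT, B.repr.apply_symm_apply, hrw,
        real_inner_smul_left, EuclideanSpace.inner_single_left]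
      simp
    have key2 : ∀ x : EuclideanSpace ℝ (Fin l),
        Real.exp (-‖T x‖^2) * (inner ℝ w (T x) : ℝ)^s
          = ‖w‖^s * (Real.exp (-‖x‖^2) * (x i₀)^(2*m)) := by
      intro x
      rw [hinner, T.norm_map, mul_pow, ← hsm]
      ring
    have mp := T.measurePreserving
    have hIntF : Integrable (fun z : EuclideanSpace ℝ (Fin l) =>
        Real.exp (-‖z‖^2) * (inner ℝ w z : ℝ)^s) := by
      refine (mp.integrable_comp_emb T.toHomeomorph.measurableEmbedding).1 ?_
      have : ((fun z : EuclideanSpace ℝ (Fin l) =>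
          Real.exp (-‖z‖^2) * (inner ℝ w z : ℝ)^s) ∘ T)
          = fun x => ‖w‖^s * (Real.exp (-‖x‖^2) * (x i₀)^(2*m)) := funext key2
      rw [this]
      exact (gaussE l i₀ m).1.const_mul _
    refine ⟨hIntF, ?_⟩
    rw [← mp.integral_comp T.toHomeomorph.measurableEmbedding]
    rw [integral_congr_ae (Filter.Eventually.of_forall key2), MeasureTheory.integral_const_mul,
      (gaussE l i₀ m).2]
    have hww : (inner ℝ w w : ℝ) = ‖w‖^2 := real_inner_self_eq_norm_sq w
    rw [hww, ← pow_mul, ← hsm, sqrt_pi_pow]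
    have h4 : (4:ℝ)^m = 2^s := by
      rw [show (4:ℝ) = 2^2 by norm_num, ← pow_mul, ← hsm]
    rw [h4]
    ring

section Polar

variable {l s : ℕ} (b : Fin s → EuclideanSpace ℝ (Fin l))

noncomputable def wv (ε : Fin s → Bool) : EuclideanSpace ℝ (Fin l) :=
  ∑ i, χ (ε i) • b i

lemma inner_wv (ε : Fin s → Bool) (z : EuclideanSpace ℝ (Fin l)) :
    (inner ℝ (wv b ε) z : ℝ) = ∑ i, χ (ε i) * (inner ℝ (b i) z : ℝ) := by
  rw [wv, sum_inner]
  exact Finset.sum_congr rfl fun i _ => real_inner_smul_left _ _ _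

lemma polarL (z : EuclideanSpace ℝ (Fin l)) :
    ∑ ε : Fin s → Bool, (∏ i, χ (ε i)) * (inner ℝ (wv b ε) z : ℝ)^s
      = 2^s * (s.factorial : ℝ) * ∏ i, (inner ℝ (b i) z : ℝ) := by
  have expand : ∀ ε : Fin s → Bool,
      (inner ℝ (wv b ε) z : ℝ)^s
        = ∑ f : Fin s → Fin s,
            (∏ j, χ (ε (f j))) * ∏ j, (inner ℝ (b (f j)) z : ℝ) := by
    intro ε
    rw [inner_wv, Fintype.sum_pow]
    exact Finset.sum_congr rfl fun f _ => Finset.prod_mul_distrib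
  simp_rw [expand, Finset.mul_sum]
  rw [Finset.sum_comm]
  have step : ∀ f : Fin s → Fin s,
      (∑ ε : Fin s → Bool, (∏ i, χ (ε i)) * ((∏ j, χ (ε (f j))) * ∏ j, (inner ℝ (b (f j)) z : ℝ)))
        = (if Function.Bijective f then (2:ℝ)^s * ∏ j, (inner ℝ (b (f j)) z : ℝ) else 0) := by
    intro f
    simp_rw [← mul_assoc]
    rw [← Finset.sum_mul, parity_sum, ite_mul, zero_mul]
  rw [Finset.sum_congr rfl (fun f _ => step f),
    sum_bij_perm (fun f => (2:ℝ)^s * ∏ j, (inner ℝ (b (f j)) z : ℝ)), ← Finset.mul_sum,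
    perm_sum_prod (fun a => (inner ℝ (b a) z : ℝ)), mul_assoc]

lemma inner_wv_self (hs2 : 2*(s/2) = s) (ε : Fin s → Bool) :
    (inner ℝ (wv b ε) (wv b ε) : ℝ)
      = ∑ p : Fin s × Fin s,
          (χ (ε p.1) * χ (ε p.2)) * (inner ℝ (b p.1) (b p.2) : ℝ) := by
  rw [Fintype.sum_prod_type]
  rw [wv, sum_inner]
  refine Finset.sum_congr rfl fun i _ => ?_
  rw [real_inner_smul_left, inner_sum, Finset.mul_sum]
  refine Finset.sum_congr rfl fun j _ => ?_
  rw [real_inner_smul_right]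
  ring

lemma polarR (hs2 : 2*(s/2) = s) :
    ∑ ε : Fin s → Bool, (∏ i, χ (ε i)) * (inner ℝ (wv b ε) (wv b ε) : ℝ)^(s/2)
      = 2^s * ∑ σ : Equiv.Perm (Fin s), ∏ k : Fin (s/2),
          (inner ℝ (b (σ ⟨2*(k:ℕ), by have := k.isLt; omega⟩))
            (b (σ ⟨2*(k:ℕ)+1, by have := k.isLt; omega⟩)) : ℝ) := by
  classical
  set P : (Fin s → Fin s) → ℝ := fun f => ∏ k : Fin (s/2),
      (inner ℝ (b (f ⟨2*(k:ℕ), by have := k.isLt; omega⟩))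
        (b (f ⟨2*(k:ℕ)+1, by have := k.isLt; omega⟩)) : ℝ) with hP
  set Φ : (Fin s → Fin s) → (Fin (s/2) → Fin s × Fin s) := fun f k =>
      (f ⟨2*(k:ℕ), by have := k.isLt; omega⟩, f ⟨2*(k:ℕ)+1, by have := k.isLt; omega⟩) with hΦdef
  have hΦ : Function.Bijective Φ := by
    refine Function.bijective_iff_has_inverse.2 ⟨fun g j =>
      if hj : (j:ℕ) % 2 = 0 then (g ⟨(j:ℕ)/2, by have := j.isLt; omega⟩).1
      else (g ⟨(j:ℕ)/2, by have := j.isLt; omega⟩).2, ?_, ?_⟩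
    · intro f
      funext j
      dsimp only [hΦdef]
      by_cases hj : (j:ℕ) % 2 = 0
      · rw [dif_pos hj]
        congr 1
        exact (congrArg f (Fin.ext (a := ⟨2*((j:ℕ)/2), by have := j.isLt; omega⟩) (b := j) (show 2*((j:ℕ)/2) = (j:ℕ) by omega)))
      · rw [dif_neg hj]
        congr 1
        exact (congrArg f (Fin.ext (a := ⟨2*((j:ℕ)/2)+1, by have := j.isLt; omega⟩) (b := j) (show 2*((j:ℕ)/2)+1 = (j:ℕ) by omega)))
    · intro g
      funext k
      simp only [hΦdef, Fin.val_mk]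
      have h1 : (2*(k:ℕ)) % 2 = 0 := by omega
      have h2 : ¬ ((2*(k:ℕ)+1) % 2 = 0) := by omega
      rw [dif_pos h1, dif_neg h2]
      have e1 : (⟨(2*(k:ℕ))/2, by have := k.isLt; omega⟩ : Fin (s/2)) = k :=
        Fin.ext (show (2*(k:ℕ))/2 = (k:ℕ) by omega)
      have e2 : (⟨(2*(k:ℕ)+1)/2, by have := k.isLt; omega⟩ : Fin (s/2)) = k :=
        Fin.ext (show (2*(k:ℕ)+1)/2 = (k:ℕ) by omega)
      rw [e1, e2]
  have expand : ∀ ε : Fin s → Bool,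
      (inner ℝ (wv b ε) (wv b ε) : ℝ)^(s/2)
        = ∑ f : Fin s → Fin s, (∏ j, χ (ε (f j))) * P f := by
    intro ε
    rw [inner_wv_self b hs2, Fintype.sum_pow]
    rw [← Fintype.sum_bijective Φ hΦ _ _ (fun f => rfl)]
    refine Finset.sum_congr rfl fun f _ => ?_
    rw [hP]
    simp only [hΦdef]
    rw [Finset.prod_mul_distrib, ← prod_fin_pair hs2 (fun j => χ (ε (f j)))]
  simp_rw [expand, Finset.mul_sum]
  rw [Finset.sum_comm]
  have step : ∀ f : Fin s → Fin s,
      (∑ ε : Fin s → Bool, (∏ i, χ (ε i)) * ((∏ j, χ (ε (f j))) * P f))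
        = (if Function.Bijective f then (2:ℝ)^s * P f else 0) := by
    intro f
    simp_rw [← mul_assoc]
    rw [← Finset.sum_mul, parity_sum, ite_mul, zero_mul]
  rw [Finset.sum_congr rfl (fun f _ => step f),
    sum_bij_perm (fun f => (2:ℝ)^s * P f), ← Finset.mul_sum]

end Polar

end WickAux

open WickAux

/-- Wick (Isserlis) formula for even `s`. -/
theorem wick_formula_even (l s : ℕ) (hs : s % 2 = 0)
    (b : Fin s → EuclideanSpace ℝ (Fin l)) :
    ∫ z : EuclideanSpace ℝ (Fin l),
        Real.exp (-‖z‖ ^ 2) * ∏ i, (inner ℝ (b i) z : ℝ)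
      = Real.pi ^ ((l : ℝ) / 2) / (2 ^ s * (Nat.factorial (s / 2))) *
        ∑ σ : Equiv.Perm (Fin s),
          ∏ k : Fin (s / 2),
            (inner ℝ (b (σ ⟨2 * k, by have := k.isLt; omega⟩))
               (b (σ ⟨2 * k + 1, by have := k.isLt; omega⟩)) : ℝ) := by
  have hs2 : 2*(s/2) = s := by omega
  have hne : ((2:ℝ)^s * (s.factorial:ℝ)) ≠ 0 := by positivity
  have hpt : ∀ z : EuclideanSpace ℝ (Fin l),
      Real.exp (-‖z‖^2) * ∏ i, (inner ℝ (b i) z : ℝ)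
        = ∑ ε : Fin s → Bool, (((2:ℝ)^s * (s.factorial:ℝ))⁻¹ * ∏ i, χ (ε i)) *
            (Real.exp (-‖z‖^2) * (inner ℝ (wv b ε) z : ℝ)^s) := by
    intro z
    have hL := polarL b z
    calc Real.exp (-‖z‖^2) * ∏ i, (inner ℝ (b i) z : ℝ)
        = (((2:ℝ)^s * (s.factorial:ℝ))⁻¹ * Real.exp (-‖z‖^2)) *
            ∑ ε : Fin s → Bool, (∏ i, χ (ε i)) * (inner ℝ (wv b ε) z : ℝ)^s := by
          rw [hL]
          field_simp
      _ = _ := by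
          rw [Finset.mul_sum]
          exact Finset.sum_congr rfl fun ε _ => by ring
  rw [integral_congr_ae (Filter.Eventually.of_forall hpt)]
  rw [integral_finset_sum univ (fun ε _ =>
    ((moment_eq l s hs (wv b ε)).1).const_mul _)]
  have hterm : ∀ ε : Fin s → Bool,
      ∫ z : EuclideanSpace ℝ (Fin l),
          (((2:ℝ)^s * (s.factorial:ℝ))⁻¹ * ∏ i, χ (ε i)) *
            (Real.exp (-‖z‖^2) * (inner ℝ (wv b ε) z : ℝ)^s)
        = (((2:ℝ)^s * (s.factorial:ℝ))⁻¹ * (π ^ ((l:ℝ)/2) * s.factorial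
            / (2^s * (s/2).factorial))) *
          ((∏ i, χ (ε i)) * (inner ℝ (wv b ε) (wv b ε) : ℝ)^(s/2)) := by
    intro ε
    rw [MeasureTheory.integral_const_mul, (moment_eq l s hs (wv b ε)).2]
    ring
  rw [Finset.sum_congr rfl (fun ε _ => hterm ε), ← Finset.mul_sum, polarR b hs2]
  have hfne : ((s/2).factorial : ℝ) ≠ 0 := Nat.cast_ne_zero.2 (Nat.factorial_ne_zero _)
  have hsne : ((s).factorial : ℝ) ≠ 0 := Nat.cast_ne_zero.2 (Nat.factorial_ne_zero _)
  have h2ne : ((2:ℝ)^s) ≠ 0 := by positivity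
  field_simp
end

section
/- Let ξ₁,…,ξ_s : U → ℝ be functions with Σᵢ ξᵢ² = 1, and let A₁,…,A_s : U → O(n+m) be orthogonal-matrix-valued functions. Then the (n+m)(s+1) × (n+m)(s+1) block matrix A whose (0,0) block is 0, whose (0,j) block is -ξⱼ·Id for j ≥ 1, whose (i,0) block is ξᵢAᵢ for i ≥ 1, and whose (i,j) block for i,j ≥ 1 is (δᵢⱼ - ξᵢξⱼ)Aᵢ, is orthogonal at every point: A(p)ᵀ A(p) = 1. -/
open Matrix

/-- The big block matrix built from a quadratic partition of unity `ξ` and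
orthogonal-matrix-valued functions `Aᵢ`.  Block `(0,0)` is `0`, block `(0,j)`
is `-ξⱼ·Id`, block `(i,0)` is `ξᵢ Aᵢ`, and block `(i,j)` is `(δᵢⱼ - ξᵢξⱼ) Aᵢ`
for `i, j ≥ 1`. -/
def patchingBlockMatrix (n m s k : ℕ) (ξ : Fin s → (Fin k → ℝ) → ℝ)
    (A : Fin s → (Fin k → ℝ) → Matrix (Fin (n + m)) (Fin (n + m)) ℝ)
    (p : Fin k → ℝ) :
    Matrix (Fin (s + 1) × Fin (n + m)) (Fin (s + 1) × Fin (n + m)) ℝ :=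
  Matrix.of fun x y =>
    (if hi : (x.1 : ℕ) = 0 then
        if hj : (y.1 : ℕ) = 0 then (0 : Matrix (Fin (n + m)) (Fin (n + m)) ℝ)
        else -(ξ ⟨(y.1 : ℕ) - 1, by have := y.1.isLt; omega⟩ p) •
          (1 : Matrix (Fin (n + m)) (Fin (n + m)) ℝ)
      else if hj : (y.1 : ℕ) = 0 then
        ξ ⟨(x.1 : ℕ) - 1, by have := x.1.isLt; omega⟩ p •
          A ⟨(x.1 : ℕ) - 1, by have := x.1.isLt; omega⟩ p
      else
        ((if x.1 = y.1 then (1 : ℝ) else 0) -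
            ξ ⟨(x.1 : ℕ) - 1, by have := x.1.isLt; omega⟩ p *
              ξ ⟨(y.1 : ℕ) - 1, by have := y.1.isLt; omega⟩ p) •
          A ⟨(x.1 : ℕ) - 1, by have := x.1.isLt; omega⟩ p) x.2 y.2

/-- The patching block matrix is orthogonal at every point. -/
theorem patchingBlockMatrix_orthogonal (n m s k : ℕ) (hs : 1 ≤ s)
    (U : Set (Fin k → ℝ))
    (ξ : Fin s → (Fin k → ℝ) → ℝ)
    (hξ : ∀ p ∈ U, ∑ i, ξ i p ^ 2 = 1)
    (A : Fin s → (Fin k → ℝ) → Matrix (Fin (n + m)) (Fin (n + m)) ℝ)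
    (hAo : ∀ i, ∀ p ∈ U, (A i p)ᵀ * A i p = 1) :
    ∀ p ∈ U,
      (patchingBlockMatrix n m s k ξ A p)ᵀ * patchingBlockMatrix n m s k ξ A p
        = 1 := by
  intro p hp
  have hξ1 : ∑ i, ξ i p ^ 2 = 1 := hξ p hp
  have hA : ∀ i (b b' : Fin (n+m)), ∑ a, A i p a b * A i p a b' = if b = b' then 1 else 0 := by
    intro i b b'
    have h := congrFun (congrFun (hAo i p hp) b) b'
    simpa [Matrix.mul_apply, Matrix.transpose_apply, Matrix.one_apply] using h
  set M := patchingBlockMatrix n m s k ξ A p with hMdef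
  have h00 : ∀ a b, M (0,a) (0,b) = 0 := by
    intro a b; simp [hMdef, patchingBlockMatrix]
  have h0s : ∀ a b (j : Fin s), M (0,a) (j.succ,b) = -(ξ j p) * (if a = b then 1 else 0) := by
    intro a b j
    simp [hMdef, patchingBlockMatrix, Fin.val_succ, Fin.succ_ne_zero, Matrix.one_apply]
    split <;> simp
  have hs0 : ∀ a b (i : Fin s), M (i.succ,a) (0,b) = ξ i p * A i p a b := by
    intro a b i; simp [hMdef, patchingBlockMatrix, Fin.val_succ, Fin.succ_ne_zero]
  have hss : ∀ a b (i j : Fin s), M (i.succ,a) (j.succ,b)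
      = ((if i = j then (1:ℝ) else 0) - ξ i p * ξ j p) * A i p a b := by
    intro a b i j
    simp [hMdef, patchingBlockMatrix, Fin.val_succ, Fin.succ_ne_zero, Fin.succ_inj]
  clear_value M
  ext ⟨j, b⟩ ⟨j', b'⟩
  simp only [Matrix.mul_apply, Matrix.transpose_apply, Fintype.sum_prod_type]
  rw [Fin.sum_univ_succ]
  obtain rfl | ⟨j, rfl⟩ := j.eq_zero_or_eq_succ <;>
    obtain rfl | ⟨j', rfl⟩ := j'.eq_zero_or_eq_succ
  · have inner : ∀ i : Fin s, ∑ a, M (i.succ, a) (0, b) * M (i.succ, a) (0, b')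
        = ξ i p ^ 2 * (if b = b' then 1 else 0) := by
      intro i
      rw [← hA i b b', Finset.mul_sum]
      refine Finset.sum_congr rfl fun a _ => ?_
      rw [hs0, hs0]; ring
    simp only [h00, zero_mul, Finset.sum_const_zero, zero_add, inner,
      ← Finset.sum_mul, hξ1, one_mul, Matrix.one_apply, Prod.ext_iff]
    simp
  · have inner : ∀ i : Fin s, ∑ a, M (i.succ, a) (0, b) * M (i.succ, a) (j'.succ, b')
        = (ξ i p * ((if i = j' then (1:ℝ) else 0) - ξ i p * ξ j' p)) * (if b = b' then 1 else 0) := by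
      intro i
      rw [← hA i b b', Finset.mul_sum]
      refine Finset.sum_congr rfl fun a _ => ?_
      rw [hs0, hss]; ring
    have key : ∑ i : Fin s, ξ i p * ((if i = j' then (1:ℝ) else 0) - ξ i p * ξ j' p)
        = 0 := by
      calc ∑ i : Fin s, ξ i p * ((if i = j' then (1:ℝ) else 0) - ξ i p * ξ j' p)
          = ∑ i : Fin s, ((if i = j' then ξ i p else 0) - ξ i p ^ 2 * ξ j' p) :=
            Finset.sum_congr rfl fun i _ => by split <;> ring
        _ = 0 := by
            rw [Finset.sum_sub_distrib, Finset.sum_ite_eq', ← Finset.sum_mul, hξ1]; simp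
    simp only [h00, zero_mul, Finset.sum_const_zero, zero_add, inner,
      ← Finset.sum_mul, key, zero_mul, Matrix.one_apply, Prod.ext_iff]
    simp [(Fin.succ_ne_zero j').symm]
  · have inner : ∀ i : Fin s, ∑ a, M (i.succ, a) (j.succ, b) * M (i.succ, a) (0, b')
        = (ξ i p * ((if i = j then (1:ℝ) else 0) - ξ i p * ξ j p)) * (if b = b' then 1 else 0) := by
      intro i
      rw [← hA i b b', Finset.mul_sum]
      refine Finset.sum_congr rfl fun a _ => ?_
      rw [hs0, hss]; ring
    have key : ∑ i : Fin s, ξ i p * ((if i = j then (1:ℝ) else 0) - ξ i p * ξ j p)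
        = 0 := by
      calc ∑ i : Fin s, ξ i p * ((if i = j then (1:ℝ) else 0) - ξ i p * ξ j p)
          = ∑ i : Fin s, ((if i = j then ξ i p else 0) - ξ i p ^ 2 * ξ j p) :=
            Finset.sum_congr rfl fun i _ => by split <;> ring
        _ = 0 := by
            rw [Finset.sum_sub_distrib, Finset.sum_ite_eq', ← Finset.sum_mul, hξ1]; simp
    have h0 : ∀ a, M (0, a) (j.succ, b) * M (0, a) (0, b') = 0 := by
      intro a; rw [h00, mul_zero]
    simp only [h0, Finset.sum_const_zero, zero_add, inner,
      ← Finset.sum_mul, key, zero_mul, Matrix.one_apply, Prod.ext_iff]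
    simp [Fin.succ_ne_zero j]
  · have inner : ∀ i : Fin s,
        ∑ a, M (i.succ, a) (j.succ, b) * M (i.succ, a) (j'.succ, b')
        = (((if i = j then (1:ℝ) else 0) - ξ i p * ξ j p) *
            ((if i = j' then (1:ℝ) else 0) - ξ i p * ξ j' p)) * (if b = b' then 1 else 0) := by
      intro i
      rw [← hA i b b', Finset.mul_sum]
      refine Finset.sum_congr rfl fun a _ => ?_
      rw [hss, hss]; ring
    have h0 : ∑ a, M (0, a) (j.succ, b) * M (0, a) (j'.succ, b')
        = (ξ j p * ξ j' p) * (if b = b' then 1 else 0) := by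
      simp only [h0s]
      rcases eq_or_ne b b' with rfl | hbb
      · simp [Finset.sum_ite_eq', mul_comm]
      · simp only [if_neg hbb, mul_zero]
        refine Finset.sum_eq_zero fun a _ => ?_
        rcases eq_or_ne a b with rfl | h1
        · simp [hbb]
        · simp [h1]
    have key : ∑ i : Fin s, ((if i = j then (1:ℝ) else 0) - ξ i p * ξ j p) *
          ((if i = j' then (1:ℝ) else 0) - ξ i p * ξ j' p)
        = (if j = j' then 1 else 0) - ξ j p * ξ j' p := by
      have expand : ∀ i : Fin s, ((if i = j then (1:ℝ) else 0) - ξ i p * ξ j p) *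
            ((if i = j' then (1:ℝ) else 0) - ξ i p * ξ j' p)
          = (if i = j then (1:ℝ) else 0) * (if i = j' then (1:ℝ) else 0)
            - (if i = j then (1:ℝ) else 0) * (ξ i p * ξ j' p)
            - (if i = j' then (1:ℝ) else 0) * (ξ i p * ξ j p)
            + ξ i p ^ 2 * (ξ j p * ξ j' p) := by
        intro i; ring
      simp only [expand, Finset.sum_add_distrib, Finset.sum_sub_distrib,
        ite_mul, one_mul, zero_mul, Finset.sum_ite_eq', Finset.mem_univ, if_true,
        ← Finset.sum_mul, hξ1]
      rcases eq_or_ne j j' with rfl | h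
      · simp; try ring
      · simp [h, Ne.symm h]; try ring
    simp only [h0, inner, ← Finset.sum_mul, key, Matrix.one_apply, Prod.ext_iff,
      Fin.succ_inj]
    rw [← add_mul]
    rcases eq_or_ne j j' with rfl | h
    · rcases eq_or_ne b b' with rfl | hbb <;> simp [*]
    · simp [h]
end

section
/- With A the block matrix built from a quadratic partition of unity ξ₁,…,ξ_s and differentiable maps A₁,…,A_s into O(n+m) as above, the top-left n×n block of A⁻¹ D_v A satisfies (A⁻¹ D_v A)_{oo} = Σᵢ ξᵢ² (Aᵢ⁻¹ D_v Aᵢ)_{oo} at every point and for every tangent vector v. -/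
open Matrix

variable {n m s k : ℕ} {ξ : Fin s → (Fin k → ℝ) → ℝ}
  {A : Fin s → (Fin k → ℝ) → Matrix (Fin (n + m)) (Fin (n + m)) ℝ} {p : Fin k → ℝ}

lemma pbm_zz (x2 y2 : Fin (n + m)) :
    patchingBlockMatrix n m s k ξ A p (0, x2) (0, y2) = 0 := by
  simp [patchingBlockMatrix]

lemma pbm_zs (i : Fin s) (x2 y2 : Fin (n + m)) :
    patchingBlockMatrix n m s k ξ A p (0, x2) (i.succ, y2)
      = -(ξ i p) * (if x2 = y2 then 1 else 0) := by
  simp [patchingBlockMatrix, Fin.val_succ, Matrix.one_apply]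
  split <;> simp

lemma pbm_sz (i : Fin s) (x2 y2 : Fin (n + m)) :
    patchingBlockMatrix n m s k ξ A p (i.succ, x2) (0, y2)
      = ξ i p * A i p x2 y2 := by
  simp [patchingBlockMatrix, Fin.val_succ]

lemma pbm_ss (i j : Fin s) (x2 y2 : Fin (n + m)) :
    patchingBlockMatrix n m s k ξ A p (i.succ, x2) (j.succ, y2)
      = ((if i = j then (1:ℝ) else 0) - ξ i p * ξ j p) * A i p x2 y2 := by
  simp [patchingBlockMatrix, Fin.val_succ, Fin.succ_inj]


lemma pbm_orth (hξp : ∑ i, ξ i p ^ 2 = 1)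
    (hAδ : ∀ t (x y : Fin (n+m)), ∑ z, A t p z x * A t p z y = if x = y then 1 else 0) :
    (patchingBlockMatrix n m s k ξ A p)ᵀ * patchingBlockMatrix n m s k ξ A p = 1 := by
  ext ⟨l, x2⟩ ⟨j, y2⟩
  rw [Matrix.mul_apply, Fintype.sum_prod_type]
  simp only [Matrix.transpose_apply]
  rw [Fin.sum_univ_succ]
  induction l using Fin.cases with
  | zero =>
      induction j using Fin.cases with
      | zero =>
          simp only [pbm_zz, pbm_sz, zero_mul, Finset.sum_const_zero, zero_add]
          have h1 : ∀ t : Fin s, ∑ z, (ξ t p * A t p z x2) * (ξ t p * A t p z y2)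
              = ξ t p ^ 2 * (if x2 = y2 then 1 else 0) := by
            intro t
            rw [← hAδ t x2 y2, Finset.mul_sum]
            exact Finset.sum_congr rfl fun z _ => by ring
          rw [Finset.sum_congr rfl fun t _ => h1 t, ← Finset.sum_mul, hξp, one_mul,
            Matrix.one_apply]
          simp
      | succ j =>
          simp only [pbm_zz, pbm_sz, pbm_ss, zero_mul, Finset.sum_const_zero, zero_add]
          have h1 : ∀ t : Fin s, ∑ z, (ξ t p * A t p z x2) *
                (((if t = j then (1:ℝ) else 0) - ξ t p * ξ j p) * A t p z y2)
              = ((if t = j then (1:ℝ) else 0) * ξ t p - ξ t p ^ 2 * ξ j p) *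
                  (if x2 = y2 then 1 else 0) := by
            intro t
            rw [← hAδ t x2 y2, Finset.mul_sum]
            exact Finset.sum_congr rfl fun z _ => by ring
          rw [Finset.sum_congr rfl fun t _ => h1 t, ← Finset.sum_mul, Matrix.one_apply]
          have h2 : ∑ t : Fin s, ((if t = j then (1:ℝ) else 0) * ξ t p - ξ t p ^ 2 * ξ j p)
              = 0 := by
            rw [Finset.sum_sub_distrib, ← Finset.sum_mul, hξp]
            simp [Finset.sum_ite_eq']
          rw [h2, zero_mul]
          simp [(Fin.succ_ne_zero j).symm]
  | succ i =>
      induction j using Fin.cases with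
      | zero =>
          simp only [pbm_zz, pbm_zs, pbm_sz, pbm_ss, mul_zero, Finset.sum_const_zero]
          have h1 : ∀ t : Fin s, ∑ z,
                (((if t = i then (1:ℝ) else 0) - ξ t p * ξ i p) * A t p z x2) *
                  (ξ t p * A t p z y2)
              = ((if t = i then (1:ℝ) else 0) * ξ t p - ξ t p ^ 2 * ξ i p) *
                  (if x2 = y2 then 1 else 0) := by
            intro t
            rw [← hAδ t x2 y2, Finset.mul_sum]
            exact Finset.sum_congr rfl fun z _ => by ring
          rw [Finset.sum_congr rfl fun t _ => h1 t, ← Finset.sum_mul, Matrix.one_apply]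
          have h2 : ∑ t : Fin s, ((if t = i then (1:ℝ) else 0) * ξ t p - ξ t p ^ 2 * ξ i p)
              = 0 := by
            rw [Finset.sum_sub_distrib, ← Finset.sum_mul, hξp]
            simp [Finset.sum_ite_eq']
          rw [h2, zero_mul, zero_add]
          simp [Fin.succ_ne_zero]
      | succ j =>
          simp only [pbm_zs, pbm_ss]
          have h0 : ∑ z, (-ξ i p * (if z = x2 then (1:ℝ) else 0)) *
                (-ξ j p * (if z = y2 then (1:ℝ) else 0))
              = ξ i p * ξ j p * (if x2 = y2 then 1 else 0) := by
            simp [mul_ite, ite_mul, Finset.sum_ite_eq', eq_comm]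
            split <;> ring
          have h1 : ∀ t : Fin s, ∑ z,
                (((if t = i then (1:ℝ) else 0) - ξ t p * ξ i p) * A t p z x2) *
                  (((if t = j then (1:ℝ) else 0) - ξ t p * ξ j p) * A t p z y2)
              = (((if t = i then (1:ℝ) else 0) - ξ t p * ξ i p) *
                  ((if t = j then (1:ℝ) else 0) - ξ t p * ξ j p)) *
                  (if x2 = y2 then 1 else 0) := by
            intro t
            rw [← hAδ t x2 y2, Finset.mul_sum]
            exact Finset.sum_congr rfl fun z _ => by ring
          rw [h0, Finset.sum_congr rfl fun t _ => h1 t, ← Finset.sum_mul]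
          have h2 : ∑ t : Fin s, (((if t = i then (1:ℝ) else 0) - ξ t p * ξ i p) *
                ((if t = j then (1:ℝ) else 0) - ξ t p * ξ j p))
              = (if i = j then 1 else 0) - ξ i p * ξ j p := by
            have : ∀ t : Fin s, ((if t = i then (1:ℝ) else 0) - ξ t p * ξ i p) *
                  ((if t = j then (1:ℝ) else 0) - ξ t p * ξ j p)
                = (if t = i then (if t = j then (1:ℝ) else 0) else 0)
                  - (if t = i then ξ t p * ξ j p else 0)
                  - (if t = j then ξ t p * ξ i p else 0)
                  + ξ t p ^ 2 * (ξ i p * ξ j p) := by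
              intro t
              split <;> split <;> ring
            rw [Finset.sum_congr rfl fun t _ => this t]
            simp only [Finset.sum_add_distrib, Finset.sum_sub_distrib,
              Finset.sum_ite_eq', Finset.mem_univ, if_true, ← Finset.sum_mul, hξp]
            rw [one_mul]
            by_cases hij : i = j <;> simp [hij] <;> ring
          rw [h2, Matrix.one_apply]
          simp only [Prod.mk.injEq, Fin.succ_inj]
          by_cases hij : i = j <;> by_cases hxy : x2 = y2 <;> simp [hij, hxy] <;> ring

/-- The top-left `n × n` block of `A⁻¹ D_v A` for the patching block matrix
is the `ξᵢ²`-weighted combination of those of the `Aᵢ`. -/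
theorem patchingBlockMatrix_maurer_cartan_oo (n m s k : ℕ) (hs : 1 ≤ s)
    (U : Set (Fin k → ℝ)) (hU : IsOpen U)
    (ξ : Fin s → (Fin k → ℝ) → ℝ)
    (hξd : ∀ i, DifferentiableOn ℝ (ξ i) U)
    (hξ : ∀ p ∈ U, ∑ i, ξ i p ^ 2 = 1)
    (A : Fin s → (Fin k → ℝ) → Matrix (Fin (n + m)) (Fin (n + m)) ℝ)
    (hAd : ∀ i a b, DifferentiableOn ℝ (fun p => A i p a b) U)
    (hAo : ∀ i, ∀ p ∈ U, (A i p)ᵀ * A i p = 1) :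
    ∀ p ∈ U, ∀ v : Fin k → ℝ, ∀ a b : Fin n,
      ((patchingBlockMatrix n m s k ξ A p)⁻¹ *
            Matrix.of fun x y =>
              fderiv ℝ (fun q => patchingBlockMatrix n m s k ξ A q x y) p v)
          ((0 : Fin (s + 1)), Fin.castAdd m a) ((0 : Fin (s + 1)), Fin.castAdd m b)
        = ∑ i : Fin s,
            ξ i p ^ 2 *
              (((A i p)⁻¹ *
                    Matrix.of fun α β => fderiv ℝ (fun q => A i q α β) p v)
                (Fin.castAdd m a) (Fin.castAdd m b)) := by
  intro p hp v a b
  have hmem := hU.mem_nhds hp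
  have hξat : ∀ i, DifferentiableAt ℝ (ξ i) p :=
    fun i => (hξd i).differentiableAt hmem
  have hAat : ∀ i x y, DifferentiableAt ℝ (fun q => A i q x y) p :=
    fun i x y => (hAd i x y).differentiableAt hmem
  have hAδ : ∀ t (x y : Fin (n + m)),
      ∑ z, A t p z x * A t p z y = if x = y then 1 else 0 := by
    intro t x y
    have h := congrFun (congrFun (hAo t p hp) x) y
    simpa [Matrix.mul_apply, Matrix.transpose_apply, Matrix.one_apply] using h
  have hsum0 : ∑ i, ξ i p * fderiv ℝ (ξ i) p v = 0 := by
    have hconst : fderiv ℝ (fun q => ∑ i, ξ i q ^ 2) p = 0 := by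
      have h1 : (fun q => ∑ i, ξ i q ^ 2) =ᶠ[nhds p] fun _ => (1 : ℝ) :=
        Filter.eventuallyEq_of_mem hmem hξ
      rw [h1.fderiv_eq]
      simp
    have hsum : fderiv ℝ (fun q => ∑ i, ξ i q ^ 2) p
        = ∑ i, fderiv ℝ (fun q => ξ i q ^ 2) p :=
      fderiv_fun_sum (fun i _ => (hξat i).pow 2)
    have h3 : ∑ i, fderiv ℝ (fun q => ξ i q ^ 2) p v = 0 := by
      have h5 := hsum.symm.trans hconst
      calc ∑ i, fderiv ℝ (fun q => ξ i q ^ 2) p v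
          = (∑ i, fderiv ℝ (fun q => ξ i q ^ 2) p) v := by
            rw [ContinuousLinearMap.sum_apply]
        _ = 0 := by rw [h5]; rfl
    have h4 : ∀ i, fderiv ℝ (fun q => ξ i q ^ 2) p v
        = 2 * (ξ i p * fderiv ℝ (ξ i) p v) := by
      intro i
      have he : (fun q => ξ i q ^ 2) = fun q => ξ i q * ξ i q := by
        funext q; ring
      rw [he, fderiv_fun_mul (hξat i) (hξat i)]
      simp
      ring
    rw [Finset.sum_congr rfl fun i _ => h4 i, ← Finset.mul_sum] at h3
    linarith
  have hinv : (patchingBlockMatrix n m s k ξ A p)⁻¹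
      = (patchingBlockMatrix n m s k ξ A p)ᵀ :=
    Matrix.inv_eq_left_inv (pbm_orth (hξ p hp) hAδ)
  have hinvA : ∀ i, (A i p)⁻¹ = (A i p)ᵀ :=
    fun i => Matrix.inv_eq_left_inv (hAo i p hp)
  have hD : ∀ (i : Fin s) (z w : Fin (n + m)),
      fderiv ℝ (fun q => patchingBlockMatrix n m s k ξ A q (i.succ, z) (0, w)) p v
        = ξ i p * fderiv ℝ (fun q => A i q z w) p v
          + A i p z w * fderiv ℝ (ξ i) p v := by
    intro i z w
    have he : (fun q => patchingBlockMatrix n m s k ξ A q (i.succ, z) (0, w))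
        = fun q => ξ i q * A i q z w := funext fun q => pbm_sz i z w
    rw [he, fderiv_fun_mul (hξat i) (hAat i z w)]
    simp
  rw [hinv, Matrix.mul_apply, Fintype.sum_prod_type, Fin.sum_univ_succ]
  simp only [Matrix.transpose_apply, Matrix.of_apply, pbm_zz, zero_mul,
    Finset.sum_const_zero, zero_add, pbm_sz]
  have hD2 : ∀ (i : Fin s) (z w : Fin (n + m)),
      fderiv ℝ (fun q => ξ i q * A i q z w) p v
        = ξ i p * fderiv ℝ (fun q => A i q z w) p v
          + A i p z w * fderiv ℝ (ξ i) p v := by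
    intro i z w
    rw [fderiv_fun_mul (hξat i) (hAat i z w)]
    simp
  simp only [hD2]
  have key : ∀ i : Fin s, ∑ z, (ξ i p * A i p z (Fin.castAdd m a)) *
        (ξ i p * fderiv ℝ (fun q => A i q z (Fin.castAdd m b)) p v
          + A i p z (Fin.castAdd m b) * fderiv ℝ (ξ i) p v)
      = ξ i p ^ 2 * (∑ z, A i p z (Fin.castAdd m a) *
            fderiv ℝ (fun q => A i q z (Fin.castAdd m b)) p v)
        + (ξ i p * fderiv ℝ (ξ i) p v) *
            (if (Fin.castAdd m a : Fin (n + m)) = Fin.castAdd m b then 1 else 0) := by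
    intro i
    rw [← hAδ i (Fin.castAdd m a) (Fin.castAdd m b), Finset.mul_sum, Finset.mul_sum,
      ← Finset.sum_add_distrib]
    exact Finset.sum_congr rfl fun z _ => by ring
  rw [Finset.sum_congr rfl fun i _ => key i, Finset.sum_add_distrib,
    ← Finset.sum_mul, hsum0, zero_mul, add_zero]
  refine Finset.sum_congr rfl fun i _ => ?_
  rw [hinvA, Matrix.mul_apply]
  simp only [Matrix.transpose_apply, Matrix.of_apply]
end

section
/- For A : U → O(n+m) differentiable, define Ω_{v,w}(p) = -¼(B_v - Q₀B_vQ₀)(B_w - Q₀B_wQ₀)(p) where B_v = A⁻¹D_vA. Then the top-left n×n block of Ω_{v,w} equals -(B_v)_{oh}(B_w)_{ho}, and using orthogonality (B_w)_{ho} = -((B_w)_{oh})ᵀ, this block equals (B_v)_{oh}·((B_w)_{oh})ᵀ. -/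
open Matrix

/-- The Maurer-Cartan matrix `B_v = A⁻¹ D_v A`. -/
noncomputable def maurerCartan (n m k : ℕ)
    (A : (Fin k → ℝ) → Matrix (Fin (n + m)) (Fin (n + m)) ℝ)
    (p v : Fin k → ℝ) : Matrix (Fin (n + m)) (Fin (n + m)) ℝ :=
  (A p)⁻¹ * Matrix.of fun i j => fderiv ℝ (fun q => A q i j) p v

/-- The diagonal involution `Q₀ = diag(-1ₙ, 1ₘ)`. -/
def diagInvolution (n m : ℕ) : Matrix (Fin (n + m)) (Fin (n + m)) ℝ :=
  Matrix.diagonal fun i : Fin (n + m) => if (i : ℕ) < n then (-1 : ℝ) else 1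

/-- Top-left `n × n` block. -/
def blockOO {n m : ℕ} (M : Matrix (Fin (n + m)) (Fin (n + m)) ℝ) :
    Matrix (Fin n) (Fin n) ℝ :=
  Matrix.of fun a b => M (Fin.castAdd m a) (Fin.castAdd m b)

/-- Top-right `n × m` block. -/
def blockOH {n m : ℕ} (M : Matrix (Fin (n + m)) (Fin (n + m)) ℝ) :
    Matrix (Fin n) (Fin m) ℝ :=
  Matrix.of fun a b => M (Fin.castAdd m a) (Fin.natAdd n b)

/-- Bottom-left `m × n` block. -/
def blockHO {n m : ℕ} (M : Matrix (Fin (n + m)) (Fin (n + m)) ℝ) :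
    Matrix (Fin m) (Fin n) ℝ :=
  Matrix.of fun a b => M (Fin.natAdd n a) (Fin.castAdd m b)

lemma sub_conj_apply {n m : ℕ} (M : Matrix (Fin (n+m)) (Fin (n+m)) ℝ)
    (i j : Fin (n+m)) :
    (M - diagInvolution n m * M * diagInvolution n m) i j
      = (1 - (if (i:ℕ) < n then (-1:ℝ) else 1) * (if (j:ℕ) < n then (-1:ℝ) else 1)) * M i j := by
  simp only [Matrix.sub_apply, diagInvolution, Matrix.mul_diagonal, Matrix.diagonal_mul]
  ring

lemma aux_blockOO {n m : ℕ} (M M' : Matrix (Fin (n+m)) (Fin (n+m)) ℝ) :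
    blockOO ((-(1/4):ℝ) • ((M - diagInvolution n m * M * diagInvolution n m) *
      (M' - diagInvolution n m * M' * diagInvolution n m)))
      = -(blockOH M * blockHO M') := by
  ext a b
  simp only [blockOO, blockOH, blockHO, Matrix.of_apply, Matrix.smul_apply,
    Matrix.neg_apply, Matrix.mul_apply, sub_conj_apply, smul_eq_mul]
  rw [Fin.sum_univ_add]
  simp only [Fin.coe_castAdd, Fin.coe_natAdd,
    show ∀ a : Fin n, ((a:ℕ) < n) = True from fun a => eq_true a.isLt,
    show ∀ c : Fin m, ((n + (c:ℕ)) < n) = False from fun c => eq_false (by omega),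
    if_true, if_false]
  simp only [show (1:ℝ) - -1 * -1 = 0 from by norm_num, zero_mul,
    Finset.sum_const_zero, zero_add]
  rw [Finset.mul_sum, ← Finset.sum_neg_distrib]
  exact Finset.sum_congr rfl fun c _ => by ring

lemma mc_antisymm (n m k : ℕ) (U : Set (Fin k → ℝ)) (hU : IsOpen U)
    (A : (Fin k → ℝ) → Matrix (Fin (n + m)) (Fin (n + m)) ℝ)
    (hAd : ∀ i j, DifferentiableOn ℝ (fun p => A p i j) U)
    (hAo : ∀ p ∈ U, (A p)ᵀ * A p = 1)
    (p : Fin k → ℝ) (hp : p ∈ U) (v : Fin k → ℝ) (i j : Fin (n + m)) :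
    maurerCartan n m k A p v i j = - maurerCartan n m k A p v j i := by
  have hd : ∀ a b, DifferentiableAt ℝ (fun q => A q a b) p :=
    fun a b => ((hAd a b) p hp).differentiableAt (hU.mem_nhds hp)
  have hinv : (A p)⁻¹ = (A p)ᵀ := Matrix.inv_eq_left_inv (hAo p hp)
  have key : ∀ i j : Fin (n + m),
      (∑ l, (A p l i * fderiv ℝ (fun q => A q l j) p v
        + A p l j * fderiv ℝ (fun q => A q l i) p v)) = 0 := by
    intro i j
    have hg : (fun q => ∑ l, A q l i * A q l j) =ᶠ[nhds p]
        (fun _ => (1 : Matrix (Fin (n + m)) (Fin (n + m)) ℝ) i j) := by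
      filter_upwards [hU.mem_nhds hp] with q hq
      have h1 := hAo q hq
      calc ∑ l, A q l i * A q l j = ((A q)ᵀ * A q) i j := by
            simp [Matrix.mul_apply, Matrix.transpose_apply]
        _ = (1 : Matrix _ _ ℝ) i j := by rw [h1]
    have h0 : fderiv ℝ (fun q => ∑ l, A q l i * A q l j) p = 0 := by
      rw [hg.fderiv_eq]; exact fderiv_const_apply _
    have hsum : fderiv ℝ (fun q => ∑ l, A q l i * A q l j) p
        = ∑ l, fderiv ℝ (fun q => A q l i * A q l j) p := by
      exact fderiv_fun_sum fun l _ => (hd l i).mul (hd l j)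
    have hmul : ∀ l : Fin (n + m), fderiv ℝ (fun q => A q l i * A q l j) p
        = A p l i • fderiv ℝ (fun q => A q l j) p
          + A p l j • fderiv ℝ (fun q => A q l i) p :=
      fun l => fderiv_mul (hd l i) (hd l j)
    have := congrArg (fun L : (Fin k → ℝ) →L[ℝ] ℝ => L v) (hsum.symm.trans h0)
    simpa [hmul, Finset.sum_apply, mul_comm] using this
  have hB : ∀ i j : Fin (n + m), maurerCartan n m k A p v i j
      = ∑ l, A p l i * fderiv ℝ (fun q => A q l j) p v := by
    intro i j
    simp [maurerCartan, hinv, Matrix.mul_apply, Matrix.transpose_apply]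
  have := key i j
  rw [hB i j, hB j i]
  linarith [Finset.sum_add_distrib (s := (Finset.univ : Finset (Fin (n+m))))
    (f := fun l => A p l i * fderiv ℝ (fun q => A q l j) p v)
    (g := fun l => A p l j * fderiv ℝ (fun q => A q l i) p v) ▸ this]

/-- The top-left block of the curvature
`Ω_{v,w} = -¼ (B_v - Q₀ B_v Q₀)(B_w - Q₀ B_w Q₀)` of the constrained
connection equals `-(B_v)_{oh} (B_w)_{ho} = (B_v)_{oh} ((B_w)_{oh})ᵀ`. -/
theorem constrained_curvature_oo_block (n m k : ℕ)
    (U : Set (Fin k → ℝ)) (hU : IsOpen U)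
    (A : (Fin k → ℝ) → Matrix (Fin (n + m)) (Fin (n + m)) ℝ)
    (hAd : ∀ i j, DifferentiableOn ℝ (fun p => A p i j) U)
    (hAo : ∀ p ∈ U, (A p)ᵀ * A p = 1) :
    ∀ p ∈ U, ∀ v w : Fin k → ℝ,
      blockOO ((-(1 / 4) : ℝ) •
          ((maurerCartan n m k A p v -
              diagInvolution n m * maurerCartan n m k A p v * diagInvolution n m) *
            (maurerCartan n m k A p w -
              diagInvolution n m * maurerCartan n m k A p w * diagInvolution n m)))
        = -(blockOH (maurerCartan n m k A p v) * blockHO (maurerCartan n m k A p w)) ∧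
      blockHO (maurerCartan n m k A p w) = -(blockOH (maurerCartan n m k A p w))ᵀ ∧
      blockOO ((-(1 / 4) : ℝ) •
          ((maurerCartan n m k A p v -
              diagInvolution n m * maurerCartan n m k A p v * diagInvolution n m) *
            (maurerCartan n m k A p w -
              diagInvolution n m * maurerCartan n m k A p w * diagInvolution n m)))
        = blockOH (maurerCartan n m k A p v) * (blockOH (maurerCartan n m k A p w))ᵀ := by
  intro p hp v w
  have h1 := aux_blockOO (maurerCartan n m k A p v) (maurerCartan n m k A p w)
  have h2 : blockHO (maurerCartan n m k A p w)
      = -(blockOH (maurerCartan n m k A p w))ᵀ := by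
    ext a b
    simp only [blockHO, blockOH, Matrix.of_apply, Matrix.neg_apply,
      Matrix.transpose_apply]
    exact mc_antisymm n m k U hU A hAd hAo p hp w _ _
  refine ⟨h1, h2, ?_⟩
  rw [h1, h2, Matrix.mul_neg, neg_neg]
end
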